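/- Brezzi coercivity-on-kernel from exactness: let V, Q be Hilbert spaces, a : V × V → ℝ a bounded symmetric positive semidefinite bilinear form and b : V × Q → ℝ bounded bilinear. Suppose there is α > 0 such that for all v in the kernel K = {v ∈ V : b(v, q) = 0 for all q ∈ Q} one has a(v, v) ≥ α‖v‖². Suppose also b satisfies the inf-sup condition with constant β > 0. Then for every bounded linear functional f on V the saddle-point problem a(u, v) + b(v, p) = f(v), b(u, q) = 0 (for all v ∈ V, q ∈ Q) has a unique solution (u, p) ∈ V × Q, with ‖u‖ + ‖p‖ ≤ C‖f‖ for C depending only on α, β, and the bounds of a and b. -/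

import Mathlib

open InnerProductSpace RealInnerProductSpace

/-- Riesz composition: turn a continuous family of functionals into a map into V. -/
noncomputable def rieszComp {V Q : Type*}
    [NormedAddCommGroup V] [InnerProductSpace ℝ V] [CompleteSpace V]
    [NormedAddCommGroup Q] [InnerProductSpace ℝ Q]
    (T : Q →L[ℝ] (V →L[ℝ] ℝ)) : Q →L[ℝ] V :=
  LinearMap.mkContinuous
    { toFun := fun q => (InnerProductSpace.toDual ℝ V).symm (T q)
      map_add' := fun q q' => by simp
      map_smul' := fun r q => by
        simp [map_smulₛₗ, starRingEnd_apply, star_trivial] }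
    ‖T‖ (fun q => by
      simpa using T.le_opNorm q)

theorem rieszComp_inner {V Q : Type*}
    [NormedAddCommGroup V] [InnerProductSpace ℝ V] [CompleteSpace V]
    [NormedAddCommGroup Q] [InnerProductSpace ℝ Q]
    (T : Q →L[ℝ] (V →L[ℝ] ℝ)) (q : Q) (v : V) :
    ⟪rieszComp T q, v⟫_ℝ = T q v := by
  simp [rieszComp, LinearMap.mkContinuous, InnerProductSpace.toDual_symm_apply]

set_option maxHeartbeats 1000000 in
/-- Brezzi theory: coercivity on the kernel plus the inf-sup condition give
well-posedness of the saddle-point problem, with a stability bound. -/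
theorem brezzi_saddle_point_wellposed
    {V Q : Type*}
    [NormedAddCommGroup V] [InnerProductSpace ℝ V] [CompleteSpace V]
    [NormedAddCommGroup Q] [InnerProductSpace ℝ Q] [CompleteSpace Q]
    (a : V →L[ℝ] V →L[ℝ] ℝ) (b : V →L[ℝ] Q →L[ℝ] ℝ)
    (hsym : ∀ u v : V, a u v = a v u)
    (hpsd : ∀ v : V, 0 ≤ a v v)
    (α : ℝ) (hα : 0 < α)
    (hcoer : ∀ v : V, (∀ q : Q, b v q = 0) → α * ‖v‖ ^ 2 ≤ a v v)
    (β : ℝ) (hβ : 0 < β)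
    (hinfsup : ∀ q : Q, β * ‖q‖ ≤ ⨆ (v : V) (_ : v ≠ 0), b v q / ‖v‖) :
    ∃ C > 0, ∀ f : V →L[ℝ] ℝ,
      ∃ (u : V) (p : Q),
        (∀ v : V, a u v + b v p = f v) ∧ (∀ q : Q, b u q = 0) ∧
        ‖u‖ + ‖p‖ ≤ C * ‖f‖ ∧
        ∀ (u' : V) (p' : Q),
          ((∀ v : V, a u' v + b v p' = f v) ∧ (∀ q : Q, b u' q = 0)) →
          u' = u ∧ p' = p := by
  classical
  -- the Riesz representative of b in the second variable
  set B' : Q →L[ℝ] V := rieszComp b.flip with hB'def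
  have hB' : ∀ (q : Q) (v : V), ⟪B' q, v⟫_ℝ = b v q := fun q v => rieszComp_inner b.flip q v
  -- lower bound for B'
  have hlow : ∀ q : Q, β * ‖q‖ ≤ ‖B' q‖ := by
    intro q
    refine (hinfsup q).trans ?_
    refine Real.iSup_le (fun v => Real.iSup_le (fun hv => ?_) (norm_nonneg _)) (norm_nonneg _)
    rw [div_le_iff₀ (norm_pos_iff.mpr hv), ← hB' q v]
    exact real_inner_le_norm _ _
  -- the kernel K
  set K : Submodule ℝ V := ⨅ q : Q, LinearMap.ker ((b.flip q : V →L[ℝ] ℝ) : V →ₗ[ℝ] ℝ) with hKdef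
  have hKmem : ∀ v : V, v ∈ K ↔ ∀ q : Q, b v q = 0 := by
    intro v
    simp [hKdef, Submodule.mem_iInf, LinearMap.mem_ker]
  have hKclosed : IsClosed (K : Set V) := by
    have : (K : Set V) = ⋂ q : Q, (LinearMap.ker ((b.flip q : V →L[ℝ] ℝ) : V →ₗ[ℝ] ℝ) : Set V) := by
      rw [hKdef]; exact Submodule.coe_iInf _
    rw [this]
    exact isClosed_iInter fun q => ContinuousLinearMap.isClosed_ker (b.flip q)
  haveI : CompleteSpace K := hKclosed.completeSpace_coe
  -- the restricted bilinear form on K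
  set aK : K →L[ℝ] K →L[ℝ] ℝ := ((a.comp K.subtypeL).flip.comp K.subtypeL).flip with haKdef
  have haK : ∀ x y : K, aK x y = a (x : V) (y : V) := by
    intro x y
    simp [haKdef, hsym (y : V) (x : V)]
  have hcoerK : IsCoercive aK := by
    refine ⟨α, hα, fun x => ?_⟩
    have hx : ∀ q : Q, b (x : V) q = 0 := (hKmem _).mp x.2
    have := hcoer (x : V) hx
    rw [haK]
    calc α * ‖x‖ * ‖x‖ = α * ‖(x : V)‖ ^ 2 := by rw [Submodule.norm_coe]; ring
    _ ≤ a (x : V) (x : V) := this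
  -- the range of B'
  have hanti : AntilipschitzWith (β⁻¹).toNNReal B' := by
    refine ContinuousLinearMap.antilipschitz_of_bound B' fun q => ?_
    rw [Real.coe_toNNReal _ (le_of_lt (inv_pos.mpr hβ))]
    calc ‖q‖ = β⁻¹ * (β * ‖q‖) := by field_simp
    _ ≤ β⁻¹ * ‖B' q‖ := mul_le_mul_of_nonneg_left (hlow q) (inv_pos.mpr hβ).le
  set R : Submodule ℝ V := LinearMap.range (B' : Q →ₗ[ℝ] V) with hRdef
  have hRclosed : IsClosed (R : Set V) := by
    have : (R : Set V) = Set.range B' := by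
      rw [hRdef]; ext x; simp [LinearMap.mem_range]
    rw [this]
    exact hanti.isClosed_range B'.uniformContinuous
  haveI : CompleteSpace R := hRclosed.completeSpace_coe
  -- constants
  set C : ℝ := α⁻¹ + β⁻¹ * (1 + ‖a‖ * α⁻¹) with hCdef
  have hCpos : 0 < C := by positivity
  refine ⟨C, hCpos, fun f => ?_⟩
  -- solve for u via Lax-Milgram on K
  obtain ⟨u0, hu0⟩ : ∃ u0 : K, ∀ y : K, a (u0 : V) (y : V) = f (y : V) := by
    set e : K ≃L[ℝ] K := hcoerK.continuousLinearEquivOfBilin with hedef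
    set w0 : K := (InnerProductSpace.toDual ℝ K).symm (f.comp K.subtypeL) with hw0def
    have hw0 : ∀ y : K, ⟪w0, y⟫_ℝ = f (y : V) := by
      intro y
      rw [hw0def, InnerProductSpace.toDual_symm_apply]
      rfl
    refine ⟨e.symm w0, fun y => ?_⟩
    rw [← haK, ← hcoerK.continuousLinearEquivOfBilin_apply, ← hedef, e.apply_symm_apply, hw0]
  obtain ⟨u, huK, hu⟩ : ∃ u : V, u ∈ K ∧ ∀ y : K, a u (y : V) = f (y : V) :=
    ⟨(u0 : V), u0.2, hu0⟩
  clear hu0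
  have hub : ∀ q : Q, b u q = 0 := (hKmem _).mp huK
  -- bound on u
  have hunorm : ‖u‖ ≤ α⁻¹ * ‖f‖ := by
    have h1 : α * ‖u‖ ^ 2 ≤ a u u := hcoer u hub
    have h2 : a u u = f u := hu ⟨u, huK⟩
    have h3 : f u ≤ ‖f‖ * ‖u‖ := le_trans (le_abs_self _) (f.le_opNorm u)
    rcases eq_or_lt_of_le (norm_nonneg u) with h | h
    · rw [← h]; positivity
    · have := h1.trans (h2.trans_le h3)
      rw [pow_two, ← mul_assoc] at this
      have := le_of_mul_le_mul_right this h
      calc ‖u‖ = α⁻¹ * (α * ‖u‖) := by field_simp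
      _ ≤ α⁻¹ * ‖f‖ := by
        apply mul_le_mul_of_nonneg_left this (le_of_lt (inv_pos.mpr hα))
  -- solve for p : the residual functional
  set g : V →L[ℝ] ℝ := f - a u with hgdef
  have hgK : ∀ y : K, g (y : V) = 0 := by
    intro y
    simp [hgdef, hu y]
  obtain ⟨w, hw, hwnorm⟩ : ∃ w : V, (∀ v : V, ⟪w, v⟫_ℝ = g v) ∧ ‖w‖ = ‖g‖ :=
    ⟨(InnerProductSpace.toDual ℝ V).symm g, fun v => InnerProductSpace.toDual_symm_apply,
      LinearIsometryEquiv.norm_map _ _⟩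
  -- w is in the range of B'
  obtain ⟨y, hy, z, hz, hwyz⟩ := R.exists_add_mem_mem_orthogonal w
  have hzK : z ∈ K := by
    rw [hKmem]
    intro q
    rw [← hB' q z]
    exact (Submodule.mem_orthogonal R z).mp hz _ (LinearMap.mem_range_self (B' : Q →ₗ[ℝ] V) q)
  have hz0 : z = 0 := by
    have h1 : ⟪w, z⟫_ℝ = 0 := by
      rw [hw]
      exact hgK ⟨z, hzK⟩
    have h2 : ⟪y, z⟫_ℝ = 0 := (Submodule.mem_orthogonal R z).mp hz y hy
    have : ⟪z, z⟫_ℝ = 0 := by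
      have : ⟪y + z, z⟫_ℝ = 0 := by rw [← hwyz]; exact h1
      rw [inner_add_left, h2, zero_add] at this
      exact this
    exact inner_self_eq_zero.mp this
  have hwR : w ∈ R := by rw [hwyz, hz0, add_zero]; exact hy
  obtain ⟨p, hp⟩ := hwR
  have hbp : ∀ v : V, b v p = g v := by
    intro v
    rw [← hw, ← hp, ContinuousLinearMap.coe_coe, hB']
  -- bound on p
  have hpnorm : ‖p‖ ≤ β⁻¹ * ((1 + ‖a‖ * α⁻¹) * ‖f‖) := by
    have h1 : β * ‖p‖ ≤ ‖g‖ := by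
      rw [← hwnorm, ← hp]; exact hlow p
    have h2 : ‖g‖ ≤ ‖f‖ + ‖a‖ * ‖u‖ := by
      calc ‖g‖ ≤ ‖f‖ + ‖a u‖ := norm_sub_le _ _
      _ ≤ ‖f‖ + ‖a‖ * ‖u‖ := by
        gcongr; exact a.le_opNorm u
    have h3 : ‖f‖ + ‖a‖ * ‖u‖ ≤ (1 + ‖a‖ * α⁻¹) * ‖f‖ := by
      have := mul_le_mul_of_nonneg_left hunorm (norm_nonneg a)
      nlinarith [norm_nonneg f]
    calc ‖p‖ = β⁻¹ * (β * ‖p‖) := by field_simp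
    _ ≤ β⁻¹ * ((1 + ‖a‖ * α⁻¹) * ‖f‖) := by
      apply mul_le_mul_of_nonneg_left ((h1.trans h2).trans h3) (le_of_lt (inv_pos.mpr hβ))
  refine ⟨u, p, ?_, hub, ?_, ?_⟩
  · intro v
    have := hbp v
    rw [hgdef] at this
    simp at this
    linarith
  · calc ‖u‖ + ‖p‖ ≤ α⁻¹ * ‖f‖ + β⁻¹ * ((1 + ‖a‖ * α⁻¹) * ‖f‖) := add_le_add hunorm hpnorm
    _ = C * ‖f‖ := by rw [hCdef]; ring
  · rintro u' p' ⟨hsolve, hker⟩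
    have hu'K : u' ∈ K := (hKmem u').mpr hker
    have hdiff : u' = u := by
      have hd : ∀ y : K, a (u' - u) (y : V) = 0 := by
        intro y
        have hbK : b (y : V) p' = 0 := (hKmem _).mp y.2 p'
        have hbK2 : b (y : V) p = 0 := (hKmem _).mp y.2 p
        have h1 : a u' (y : V) = f (y : V) := by
          have := hsolve (y : V); rw [hbK] at this; linarith
        have h2 : a u (y : V) = f (y : V) := hu y
        simp [map_sub, h1, h2]
      have hdK : u' - u ∈ K := K.sub_mem hu'K huK
      have := hcoer (u' - u) ((hKmem _).mp hdK)
      have h0 : a (u' - u) (u' - u) = 0 := hd ⟨u' - u, hdK⟩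
      rw [h0] at this
      have hx : ‖u' - u‖ ^ 2 ≤ 0 := by
        have h4 := mul_le_mul_of_nonneg_left this (inv_pos.mpr hα).le
        rw [mul_zero, ← mul_assoc, inv_mul_cancel₀ hα.ne', one_mul] at h4
        exact h4
      have h5 : ‖u' - u‖ ^ 2 = 0 := le_antisymm hx (sq_nonneg _)
      have hn : ‖u' - u‖ = 0 := by
        exact pow_eq_zero_iff (by norm_num) |>.mp h5
      exact sub_eq_zero.mp (norm_eq_zero.mp hn)
    refine ⟨hdiff, ?_⟩
    have hbpp : ∀ v : V, b v (p' - p) = 0 := by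
      intro v
      have h1 := hsolve v
      have h2 : a u v + b v p = f v := by
        have := hbp v
        rw [hgdef] at this
        simp at this
        linarith
      rw [hdiff] at h1
      have : b v p' = b v p := by linarith
      simp [map_sub, this]
    have hB'0 : B' (p' - p) = 0 := by
      have : ⟪B' (p' - p), B' (p' - p)⟫_ℝ = 0 := by
        rw [hB']
        exact hbpp _
      exact inner_self_eq_zero.mp this
    have := hlow (p' - p)
    rw [hB'0, norm_zero] at this
    have hn : ‖p' - p‖ = 0 := le_antisymm (nonpos_of_mul_nonpos_right this hβ |>.trans (le_refl 0)) (norm_nonneg _)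
    exact sub_eq_zero.mp (norm_eq_zero.mp hn)
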